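/- Let 0 → A → B → C → 0 be a short exact sequence of locally convex K-vector spaces with strict maps (i.e., the maps induce isomorphisms onto their images with quotient/subspace topologies). If every continuous linear functional on a subspace of B extends to B (e.g., K spherically complete, or B of countable type), then the dual sequence 0 → C' → B' → A' → 0 of continuous dual spaces is exact as a sequence of abelian groups. -/

import Mathlib

open Filter Topology Pointwise

/-- A map of topological spaces (in practice a continuous linear map of LCVS) is strict if it is
continuous and induces a topological isomorphism `V/ker f ≅ im f`; equivalently, images of open
sets are open in the subspace topology of the range. -/
def IsStrictMap {V W : Type*} [TopologicalSpace V] [TopologicalSpace W] (f : V → W) : Prop :=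
  Continuous f ∧ ∀ U : Set V, IsOpen U → ∃ O : Set W, IsOpen O ∧ f '' U = O ∩ Set.range f

/-- If `0 → A → B → C → 0` is a strict exact sequence of locally convex `K`-vector spaces and
Hahn-Banach holds for `B` (every continuous functional on a subspace of `B` extends), then the
dual sequence `0 → C' → B' → A' → 0` is exact as a sequence of abelian groups. -/
theorem stmt5 {K A B C : Type*} [NontriviallyNormedField K] [CompleteSpace K]
    [IsUltrametricDist K]
    [AddCommGroup A] [Module K A] [TopologicalSpace A] [IsTopologicalAddGroup A]
    [ContinuousSMul K A]
    [AddCommGroup B] [Module K B] [TopologicalSpace B] [IsTopologicalAddGroup B]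
    [ContinuousSMul K B]
    [AddCommGroup C] [Module K C] [TopologicalSpace C] [IsTopologicalAddGroup C]
    [ContinuousSMul K C]
    (ι : A →L[K] B) (π : B →L[K] C)
    (hinj : Function.Injective ι) (hsurj : Function.Surjective π)
    (hexact : ∀ b : B, π b = 0 ↔ ∃ a : A, ι a = b)
    (hιs : _root_.IsStrictMap ι) (hπs : _root_.IsStrictMap π)
    (hHB : ∀ (p : Submodule K B) (f : p →L[K] K), ∃ g : B →L[K] K, ∀ x : p, g x = f x) :
    Function.Injective (fun f : C →L[K] K => f.comp π) ∧
      (∀ g : B →L[K] K, (∀ a : A, g (ι a) = 0) ↔ ∃ f : C →L[K] K, f.comp π = g) ∧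
      Function.Surjective (fun g : B →L[K] K => g.comp ι) := by

  have hker : ∀ g : B →L[K] K, (∀ a : A, g (ι a) = 0) → ∀ b b' : B, π b = π b' → g b = g b' := by
    intro g hg b b' h
    have h0 : π (b - b') = 0 := by simp [h]
    obtain ⟨a, ha⟩ := (hexact _).mp h0
    have h1 := hg a
    rw [ha, map_sub, sub_eq_zero] at h1
    exact h1
  refine ⟨?_, ?_, ?_⟩
  · intro f f' h
    ext c
    obtain ⟨b, rfl⟩ := hsurj c
    exact DFunLike.congr_fun h b
  · intro g
    constructor
    · intro hg
      set s := Function.surjInv hsurj with hs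
      have hπs' : ∀ c, π (s c) = c := Function.surjInv_eq hsurj
      have key := hker g hg
      have hcont : Continuous fun c => g (s c) := by
        rw [continuous_def]
        intro V hV
        have heq : (fun c => g (s c)) ⁻¹' V = π '' (g ⁻¹' V) := by
          ext c
          constructor
          · intro hc; exact ⟨s c, hc, hπs' c⟩
          · rintro ⟨b, hb, rfl⟩
            have : g (s (π b)) = g b := key _ _ (hπs' _)
            simpa [this] using hb
        rw [heq]
        obtain ⟨O, hO, hOeq⟩ := hπs.2 _ (hV.preimage g.continuous)
        rw [hOeq, Set.range_eq_univ.mpr hsurj, Set.inter_univ]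
        exact hO
      refine ⟨{ toFun := fun c => g (s c)
                map_add' := ?_
                map_smul' := ?_
                cont := hcont }, ?_⟩
      · intro c c'
        have : g (s (c + c')) = g (s c + s c') := key _ _ (by simp [hπs'])
        simpa using this
      · intro k c
        have : g (s (k • c)) = g (k • s c) := key _ _ (by simp [hπs'])
        simpa using this
      · ext b
        exact key _ _ (hπs' (π b))
    · rintro ⟨f, rfl⟩
      intro a
      have : π (ι a) = 0 := (hexact (ι a)).mpr ⟨a, rfl⟩
      simp [this]
  · intro h
    set p : Submodule K B := LinearMap.range (ι : A →ₗ[K] B) with hp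
    set e : A ≃ₗ[K] p := LinearEquiv.ofInjective (ι : A →ₗ[K] B) hinj with he
    have hιe : ∀ x : p, ι (e.symm x) = (x : B) := by
      intro x
      exact LinearEquiv.ofInjective_symm_apply (f := (ι : A →ₗ[K] B)) (h := hinj) x
    have hecont : Continuous (e.symm : p → A) := by
      rw [continuous_def]
      intro U hU
      obtain ⟨O, hO, hOeq⟩ := hιs.2 U hU
      have heq : (e.symm : p → A) ⁻¹' U = Subtype.val ⁻¹' O := by
        ext x
        simp only [Set.mem_preimage]
        constructor
        · intro hx
          have hmem : (x : B) ∈ ι '' U := ⟨e.symm x, hx, hιe x⟩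
          rw [hOeq] at hmem
          exact hmem.1
        · intro hx
          have hx2 : (x : B) ∈ O ∩ Set.range ι := ⟨hx, ⟨e.symm x, hιe x⟩⟩
          rw [← hOeq] at hx2
          obtain ⟨a, haU, ha⟩ := hx2
          have : e.symm x = a := hinj (by rw [hιe x, ha])
          rwa [this]
      rw [heq]
      exact hO.preimage continuous_subtype_val
    let f : p →L[K] K :=
      { toLinearMap := h.toLinearMap ∘ₗ (e.symm : p →ₗ[K] A)
        cont := h.continuous.comp hecont }
    obtain ⟨g, hg⟩ := hHB p f
    refine ⟨g, ?_⟩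
    ext a
    have hmem : ι a ∈ p := ⟨a, rfl⟩
    have h1 := hg ⟨ι a, hmem⟩
    have h2 : e.symm ⟨ι a, hmem⟩ = a := hinj (by rw [hιe])
    simpa [f, h2] using h1
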